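/- Let f: Z_p → Q_p be given by a polynomial with coefficients in Z_p that has a simple zero in Z_p. Then the quotient set R(f(Z^+)) = { f(m)/f(n) : m, n ∈ Z^+, f(n) ≠ 0 } is dense in Q_p. -/

import Mathlib

private lemma qadd_norm {p : ℕ} [Fact p.Prime] {a b : ℚ_[p]} (h : ‖b‖ < ‖a‖) :
    ‖a + b‖ = ‖a‖ := by
  rw [Padic.add_eq_max_of_ne h.ne', max_eq_left h.le]

private lemma znorm_le_of_dvd {p : ℕ} [Fact p.Prime] {a b : ℤ_[p]} (h : a ∣ b) : ‖b‖ ≤ ‖a‖ := by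
  obtain ⟨d, rfl⟩ := h
  rw [norm_mul]
  exact mul_le_of_le_one_right (norm_nonneg _) (PadicInt.norm_le_one d)

private lemma qsub_norm_le {p : ℕ} [Fact p.Prime] (a b : ℚ_[p]) :
    ‖a - b‖ ≤ max ‖a‖ ‖b‖ := by
  rw [sub_eq_add_neg]
  simpa using Padic.nonarchimedean a (-b)

/-- If a polynomial `f` over `ℤ_p` has a simple zero in `ℤ_p`, then the quotient set
of its values at positive integers is dense in `ℚ_p`. -/
theorem stmt_16 (p : ℕ) [Fact p.Prime] (f : Polynomial ℤ_[p])
    (hsimple : ∃ α : ℤ_[p], f.eval α = 0 ∧ f.derivative.eval α ≠ 0) :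
    Dense {q : ℚ_[p] | ∃ m n : ℕ, 0 < m ∧ 0 < n ∧ f.eval (n : ℤ_[p]) ≠ 0 ∧
      q = ((f.eval (m : ℤ_[p]) : ℤ_[p]) : ℚ_[p]) / ((f.eval (n : ℤ_[p]) : ℤ_[p]) : ℚ_[p])} := by
  obtain ⟨α, hf0, hc⟩ := hsimple
  rw [Metric.dense_iff]
  intro x ε hε
  set c : ℤ_[p] := f.derivative.eval α with hcdef
  have hC : (0:ℝ) < ‖c‖ := norm_pos_iff.mpr hc
  have hC1 : ‖c‖ ≤ 1 := PadicInt.norm_le_one c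
  have hppos : 0 < p := (Fact.out : p.Prime).pos
  have hp1 : (1:ℝ) < p := by exact_mod_cast (Fact.out : p.Prime).one_lt
  have hpinv : (p:ℝ)⁻¹ < 1 := inv_lt_one_of_one_lt₀ hp1
  have hpinv0 : (0:ℝ) < (p:ℝ)⁻¹ := by positivity
  set Q : ℝ := max ‖x‖ 1 with hQdef
  have hQ : 0 < Q := lt_of_lt_of_le one_pos (le_max_right _ _)
  have hxQ : ‖x‖ ≤ Q := le_max_left _ _
  have h1Q : (1:ℝ) ≤ Q := le_max_right _ _
  -- choose j
  obtain ⟨j, hj⟩ := exists_pow_lt_of_lt_one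
    (show (0:ℝ) < min (1/Q) (min ‖c‖ (ε * ‖c‖ / (Q * Q))) by positivity) hpinv
  set δ : ℝ := ((p:ℝ)⁻¹) ^ j with hδdef
  have hδ0 : 0 < δ := pow_pos hpinv0 j
  have hδ1 : δ < 1/Q := lt_of_lt_of_le hj (min_le_left _ _)
  have hδ2 : δ < ‖c‖ := lt_of_lt_of_le hj (le_trans (min_le_right _ _) (min_le_left _ _))
  have hδ3 : δ < ε * ‖c‖ / (Q * Q) :=
    lt_of_lt_of_le hj (le_trans (min_le_right _ _) (min_le_right _ _))
  set π : ℤ_[p] := (p : ℤ_[p]) ^ j with hπdef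
  have hπnorm : ‖π‖ = δ := by
    rw [hπdef, PadicInt.norm_p_pow, hδdef, zpow_neg, zpow_natCast, inv_pow]
  have hπqnorm : ‖(π : ℚ_[p])‖ = δ := by rw [PadicInt.padic_norm_e_of_padicInt, hπnorm]
  -- t = x * π lies in ℤ_[p]
  have htle : ‖x * (π : ℚ_[p])‖ ≤ 1 := by
    rw [norm_mul, hπqnorm]
    calc ‖x‖ * δ ≤ Q * δ := mul_le_mul_of_nonneg_right hxQ hδ0.le
    _ ≤ Q * (1/Q) := mul_le_mul_of_nonneg_left hδ1.le hQ.le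
    _ = 1 := by field_simp
  set tz : ℤ_[p] := ⟨x * (π : ℚ_[p]), htle⟩ with htzdef
  have htzq : (tz : ℚ_[p]) = x * (π : ℚ_[p]) := rfl
  obtain ⟨k, hk⟩ := f.binomExpansion α tz
  obtain ⟨k', hk'⟩ := f.binomExpansion α π
  rw [hf0, ← hcdef, zero_add] at hk hk'
  -- choose N
  obtain ⟨N, hN⟩ := exists_pow_lt_of_lt_one
    (show (0:ℝ) < min (‖c‖ * δ) (ε * ((‖c‖ * δ) * (‖c‖ * δ))) by positivity) hpinv
  set η : ℝ := ((p:ℝ)⁻¹) ^ N with hηdef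
  have hη1 : η < ‖c‖ * δ := lt_of_lt_of_le hN (min_le_left _ _)
  have hη2 : η < ε * ((‖c‖ * δ) * (‖c‖ * δ)) := lt_of_lt_of_le hN (min_le_right _ _)
  have hηeq : ((p:ℝ) : ℝ) ^ (-(N:ℤ)) = η := by
    rw [hηdef, zpow_neg, zpow_natCast, inv_pow]
  set m : ℕ := (α + tz).appr N + p ^ N with hmdef
  set n : ℕ := (α + π).appr N + p ^ N with hndef
  have hm0 : 0 < m := Nat.lt_of_lt_of_le (pow_pos hppos N) (Nat.le_add_left _ _)
  have hn0 : 0 < n := Nat.lt_of_lt_of_le (pow_pos hppos N) (Nat.le_add_left _ _)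
  have happr : ∀ y : ℤ_[p], ‖((y.appr N + p ^ N : ℕ) : ℤ_[p]) - y‖ ≤ η := by
    intro y
    have h1 : ‖y - (y.appr N : ℤ_[p])‖ ≤ η := by
      rw [← hηeq]
      exact (PadicInt.norm_le_pow_iff_mem_span_pow _ N).mpr (y.appr_spec N)
    have h2 : ‖((y.appr N + p ^ N : ℕ) : ℤ_[p]) - y‖
        = ‖((y.appr N : ℤ_[p]) - y) + (p : ℤ_[p]) ^ N‖ := by
      push_cast
      ring_nf
    rw [h2]
    refine le_trans (PadicInt.nonarchimedean _ _) (max_le ?_ ?_)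
    · rwa [norm_sub_rev] at h1
    · rw [PadicInt.norm_p_pow]; exact le_of_eq hηeq
  -- errors in ℤ_[p]
  have hem : ‖f.eval ((m : ℕ) : ℤ_[p]) - f.eval (α + tz)‖ ≤ η :=
    le_trans (znorm_le_of_dvd (Polynomial.sub_dvd_eval_sub _ _ f)) (happr (α + tz))
  have hen : ‖f.eval ((n : ℕ) : ℤ_[p]) - f.eval (α + π)‖ ≤ η :=
    le_trans (znorm_le_of_dvd (Polynomial.sub_dvd_eval_sub _ _ f)) (happr (α + π))
  -- pass to ℚ_[p]
  set a : ℚ_[p] := ((f.eval (α + tz) : ℤ_[p]) : ℚ_[p]) with hadef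
  set b : ℚ_[p] := ((f.eval (α + π) : ℤ_[p]) : ℚ_[p]) with hbdef
  set a' : ℚ_[p] := ((f.eval ((m:ℕ) : ℤ_[p]) : ℤ_[p]) : ℚ_[p]) with ha'def
  set b' : ℚ_[p] := ((f.eval ((n:ℕ) : ℤ_[p]) : ℤ_[p]) : ℚ_[p]) with hb'def
  have ha : a = (c : ℚ_[p]) * (x * (π:ℚ_[p])) + (k : ℚ_[p]) * (x * (π:ℚ_[p]))^2 := by
    rw [hadef, hk]; push_cast [htzq]; ring
  have hb : b = (c : ℚ_[p]) * (π:ℚ_[p]) + (k' : ℚ_[p]) * (π:ℚ_[p])^2 := by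
    rw [hbdef, hk']; push_cast; ring
  have hbnorm : ‖b‖ = ‖c‖ * δ := by
    rw [hb]
    rw [qadd_norm]
    · rw [norm_mul, hπqnorm, PadicInt.padic_norm_e_of_padicInt]
    · rw [norm_mul, norm_mul, norm_pow, hπqnorm, PadicInt.padic_norm_e_of_padicInt,
        PadicInt.padic_norm_e_of_padicInt]
      calc ‖k'‖ * δ ^ 2 ≤ 1 * δ ^ 2 :=
            mul_le_mul_of_nonneg_right (PadicInt.norm_le_one k') (sq_nonneg δ)
        _ = δ * δ := by ring
        _ < ‖c‖ * δ := mul_lt_mul_of_pos_right hδ2 hδ0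
  have hbpos : 0 < ‖b‖ := by rw [hbnorm]; positivity
  have hbne : b ≠ 0 := by intro h; rw [h, norm_zero] at hbpos; exact lt_irrefl _ hbpos
  have hema : ‖a' - a‖ ≤ η := by
    rw [ha'def, hadef, ← PadicInt.coe_sub, PadicInt.padic_norm_e_of_padicInt]
    exact hem
  have hemb : ‖b' - b‖ ≤ η := by
    rw [hb'def, hbdef, ← PadicInt.coe_sub, PadicInt.padic_norm_e_of_padicInt]
    exact hen
  have hb'norm : ‖b'‖ = ‖c‖ * δ := by
    have : b' = b + (b' - b) := by ring
    rw [this, qadd_norm, hbnorm]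
    rw [hbnorm]
    exact lt_of_le_of_lt hemb hη1
  have hb'pos : 0 < ‖b'‖ := by rw [hb'norm]; positivity
  have hb'ne : b' ≠ 0 := by intro h; rw [h, norm_zero] at hb'pos; exact lt_irrefl _ hb'pos
  have hfn : f.eval ((n:ℕ) : ℤ_[p]) ≠ 0 := by
    intro h
    apply hb'ne
    rw [hb'def, h, PadicInt.coe_zero]
  -- estimate 1 : ‖a/b - x‖ < ε
  have key : a - x * b = x * (π:ℚ_[p])^2 * ((k:ℚ_[p]) * x - (k':ℚ_[p])) := by
    rw [ha, hb]; ring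
  have hnum1 : ‖a - x * b‖ ≤ ‖x‖ * (δ^2 * Q) := by
    rw [key, norm_mul, norm_mul, norm_pow, hπqnorm, mul_assoc]
    refine mul_le_mul_of_nonneg_left ?_ (norm_nonneg x)
    refine mul_le_mul_of_nonneg_left ?_ (by positivity)
    refine le_trans (qsub_norm_le _ _) (max_le ?_ ?_)
    · rw [norm_mul, PadicInt.padic_norm_e_of_padicInt]
      calc ‖k‖ * ‖x‖ ≤ 1 * ‖x‖ :=
            mul_le_mul_of_nonneg_right (PadicInt.norm_le_one k) (norm_nonneg x)
        _ = ‖x‖ := one_mul _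
        _ ≤ Q := hxQ
    · rw [PadicInt.padic_norm_e_of_padicInt]
      exact le_trans (PadicInt.norm_le_one k') h1Q
  have est1 : ‖a / b - x‖ < ε := by
    have heq : a / b - x = (a - x * b) / b := by field_simp
    rw [heq, norm_div, hbnorm, div_lt_iff₀ (by positivity)]
    calc ‖a - x * b‖ ≤ ‖x‖ * (δ^2 * Q) := hnum1
      _ ≤ Q * (δ^2 * Q) := by
          refine mul_le_mul_of_nonneg_right hxQ (by positivity)
      _ = (Q * Q) * δ * δ := by ring
      _ < (ε * ‖c‖) * δ := by
          have h4 : (Q * Q) * δ < ε * ‖c‖ := by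
            have := (lt_div_iff₀ (show (0:ℝ) < Q * Q by positivity)).mp hδ3
            linarith
          exact mul_lt_mul_of_pos_right h4 hδ0
      _ = ε * (‖c‖ * δ) := by ring
  -- estimate 2 : ‖a'/b' - a/b‖ < ε
  have est2 : ‖a' / b' - a / b‖ < ε := by
    have heq : a' / b' - a / b = ((a' - a) * b - a * (b' - b)) / (b * b') := by
      field_simp; ring
    have hnum2 : ‖(a' - a) * b - a * (b' - b)‖ ≤ η := by
      refine le_trans (qsub_norm_le _ _) (max_le ?_ ?_)
      · rw [norm_mul]
        calc ‖a' - a‖ * ‖b‖ ≤ η * 1 := by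
              refine mul_le_mul hema ?_ (norm_nonneg _) ?_
              · rw [hbdef, PadicInt.padic_norm_e_of_padicInt]
                exact PadicInt.norm_le_one _
              · exact le_trans (norm_nonneg _) hema
          _ = η := mul_one _
      · rw [norm_mul]
        calc ‖a‖ * ‖b' - b‖ ≤ 1 * η := by
              refine mul_le_mul ?_ hemb (norm_nonneg _) zero_le_one
              rw [hadef, PadicInt.padic_norm_e_of_padicInt]
              exact PadicInt.norm_le_one _
          _ = η := one_mul _
    rw [heq, norm_div, norm_mul, hbnorm, hb'norm, div_lt_iff₀ (by positivity)]
    calc ‖(a' - a) * b - a * (b' - b)‖ ≤ η := hnum2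
      _ < ε * ((‖c‖ * δ) * (‖c‖ * δ)) := hη2
  -- combine
  refine ⟨a' / b', ?_, ⟨m, n, hm0, hn0, hfn, rfl⟩⟩
  rw [Metric.mem_ball, dist_eq_norm]
  have : a' / b' - x = (a' / b' - a / b) + (a / b - x) := by ring
  rw [this]
  exact lt_of_le_of_lt (Padic.nonarchimedean _ _) (max_lt est2 est1)
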